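/- Let γ : ℝ → ℝ be C², 2π-periodic, positive, and let θ₋ ≠ θ₊. The jump condition γ(θ₊)τ(θ₊) − γ'(θ₊)ν(θ₊) = γ(θ₋)τ(θ₋) − γ'(θ₋)ν(θ₋) (continuity of capillary force) holds if and only if the Frank potential points g(θ₋) and g(θ₊) lie on a common tangent line of the Frank diagram, i.e., g(θ₊) − g(θ₋) is parallel to g'(θ₋) and g'(θ₊) is parallel to g'(θ₋). -/

import Mathlib

open Real

/-- In the plane, if the cross product of `a` with `b` vanishes and `b ≠ 0`,
then `a` is a scalar multiple of `b`. -/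
lemma colin_of_cross_eq_zero {a b : ℝ × ℝ} (hb : b ≠ 0)
    (h : a.1 * b.2 - a.2 * b.1 = 0) : ∃ t : ℝ, a = t • b := by
  have hden : b.1 ^ 2 + b.2 ^ 2 ≠ 0 := by
    intro h0
    apply hb
    have h1 : b.1 = 0 := by nlinarith [sq_nonneg b.1, sq_nonneg b.2]
    have h2 : b.2 = 0 := by nlinarith [sq_nonneg b.1, sq_nonneg b.2]
    exact Prod.ext h1 h2
  refine ⟨(a.1 * b.1 + a.2 * b.2) / (b.1 ^ 2 + b.2 ^ 2), Prod.ext ?_ ?_⟩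
  · show a.1 = _ * b.1
    field_simp
    linear_combination b.2 * h
  · show a.2 = _ * b.2
    field_simp
    linear_combination (-b.1) * h

/-- Maxwell-line characterization of corners: continuity of the capillary force
`C(θ) = γ τ − γ' ν` across a corner `θ₋ ≠ θ₊` holds iff the Frank potential
points `g(θ₋)`, `g(θ₊)` lie on a common tangent line of the Frank diagram. -/
theorem corner_condition_iff_maxwell_line
    (γ : ℝ → ℝ) (hγ : ContDiff ℝ 2 γ) (hγp : Function.Periodic γ (2 * π))
    (hγpos : ∀ θ, 0 < γ θ)
    (τ ν g C : ℝ → ℝ × ℝ)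
    (hτ : ∀ θ, τ θ = (Real.cos θ, Real.sin θ))
    (hν : ∀ θ, ν θ = (Real.sin θ, -Real.cos θ))
    (hg : ∀ θ, g θ = (γ θ)⁻¹ • ν θ)
    (hC : ∀ θ, C θ = γ θ • τ θ - deriv γ θ • ν θ)
    (θm θp : ℝ) (hne : θm ≠ θp) :
    C θp = C θm ↔
      ((∃ t : ℝ, g θp - g θm = t • deriv g θm) ∧
        (∃ u : ℝ, deriv g θp = u • deriv g θm)) := by
  have hγne : ∀ θ, γ θ ≠ 0 := fun θ => (hγpos θ).ne'
  have hγd : ∀ θ, HasDerivAt γ (deriv γ θ) θ := fun θ =>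
    ((hγ.differentiable (by norm_num)) θ).hasDerivAt
  -- explicit formula for g and its derivative
  have hgfun : g = fun θ => ((γ θ)⁻¹ * Real.sin θ, -((γ θ)⁻¹ * Real.cos θ)) := by
    funext θ
    rw [hg, hν]
    simp [Prod.smul_mk, smul_eq_mul, mul_neg]
  have hDg : ∀ θ, HasDerivAt g
      (-(deriv γ θ) / (γ θ) ^ 2 * Real.sin θ + (γ θ)⁻¹ * Real.cos θ,
       -(-(deriv γ θ) / (γ θ) ^ 2 * Real.cos θ + (γ θ)⁻¹ * (-Real.sin θ))) θ := by
    intro θ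
    rw [hgfun]
    exact (((hγd θ).inv (hγne θ)).mul (Real.hasDerivAt_sin θ)).prodMk
      ((((hγd θ).inv (hγne θ)).mul (Real.hasDerivAt_cos θ)).neg)
  have hdg : ∀ θ, deriv g θ =
      (-(deriv γ θ) / (γ θ) ^ 2 * Real.sin θ + (γ θ)⁻¹ * Real.cos θ,
       -(-(deriv γ θ) / (γ θ) ^ 2 * Real.cos θ + (γ θ)⁻¹ * (-Real.sin θ))) :=
    fun θ => (hDg θ).deriv
  -- Key identity K2 : C θ = (γ θ)^2 • deriv g θ
  have K2 : ∀ θ, C θ = (γ θ) ^ 2 • deriv g θ := by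
    intro θ
    rw [hC, hτ, hν, hdg]
    refine Prod.ext ?_ ?_ <;>
      · simp [Prod.smul_mk, smul_eq_mul]
        field_simp [hγne θ] <;> ring
  -- Key identity K1 : cross (g θ) (deriv g θ) = (γ θ)⁻²
  have K1 : ∀ θ, (g θ).1 * (deriv g θ).2 - (g θ).2 * (deriv g θ).1 = ((γ θ) ^ 2)⁻¹ := by
    intro θ
    rw [hdg, hg, hν]
    have hpyth := Real.sin_sq_add_cos_sq θ
    simp only [Prod.smul_mk, smul_eq_mul]
    field_simp [hγne θ]
    linear_combination (γ θ) * hpyth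
  -- abbreviations
  set a := g θm with ha
  set b := g θp with hb
  set A := deriv g θm with hA
  set B := deriv g θp with hB
  have hAne : A ≠ 0 := by
    intro h0
    have := K1 θm
    rw [← hA, h0] at this
    simp at this
    exact (pow_ne_zero 2 (hγne θm)) this.symm
  constructor
  · intro hCeq
    -- from C θp = C θm : γp² B = γm² A
    have hCB : (γ θp) ^ 2 • B = (γ θm) ^ 2 • A := by
      rw [← K2 θp, ← K2 θm]; exact hCeq
    have hp2 : ((γ θp) ^ 2 : ℝ) ≠ 0 := pow_ne_zero 2 (hγne θp)
    have hm2 : ((γ θm) ^ 2 : ℝ) ≠ 0 := pow_ne_zero 2 (hγne θm)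
    have hBA : B = ((γ θm) ^ 2 / (γ θp) ^ 2) • A := by
      rw [div_eq_mul_inv, mul_comm, mul_smul, ← hCB, smul_smul,
        inv_mul_cancel₀ hp2, one_smul]
    refine ⟨?_, ⟨(γ θm) ^ 2 / (γ θp) ^ 2, hBA⟩⟩
    -- show (b - a) parallel to A via cross product
    have hcrossA : a.1 * A.2 - a.2 * A.1 = ((γ θm) ^ 2)⁻¹ := K1 θm
    have hcrossB : b.1 * B.2 - b.2 * B.1 = ((γ θp) ^ 2)⁻¹ := K1 θp
    have hbA : b.1 * A.2 - b.2 * A.1 = ((γ θm) ^ 2)⁻¹ := by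
      -- A = (γp²/γm²) • B
      have hAB : A = ((γ θp) ^ 2 / (γ θm) ^ 2) • B := by
        rw [div_eq_mul_inv, mul_comm, mul_smul, hCB, smul_smul,
          inv_mul_cancel₀ hm2, one_smul]
      have h1 : A.1 = ((γ θp) ^ 2 / (γ θm) ^ 2) * B.1 := by rw [hAB]; rfl
      have h2 : A.2 = ((γ θp) ^ 2 / (γ θm) ^ 2) * B.2 := by rw [hAB]; rfl
      rw [h1, h2, show b.1 * (γ θp ^ 2 / γ θm ^ 2 * B.2) - b.2 * (γ θp ^ 2 / γ θm ^ 2 * B.1)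
            = (γ θp ^ 2 / γ θm ^ 2) * (b.1 * B.2 - b.2 * B.1) from by ring, hcrossB]
      field_simp
      rw [div_mul_eq_div_div, div_self (hγne θp)]
    have hzero : (b - a).1 * A.2 - (b - a).2 * A.1 = 0 := by
      simp only [Prod.fst_sub, Prod.snd_sub]
      linear_combination hbA - hcrossA
    exact colin_of_cross_eq_zero hAne hzero
  · rintro ⟨⟨t, ht⟩, ⟨u, hu⟩⟩
    -- b = a + t A, B = u A ; use K1 to pin down u
    have hba : b = a + t • A := by rw [← ht]; abel
    have hB1 : B.1 = u * A.1 := by rw [hu]; rfl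
    have hB2 : B.2 = u * A.2 := by rw [hu]; rfl
    have hb1 : b.1 = a.1 + t * A.1 := by rw [hba]; rfl
    have hb2 : b.2 = a.2 + t * A.2 := by rw [hba]; rfl
    have hcrossA : a.1 * A.2 - a.2 * A.1 = ((γ θm) ^ 2)⁻¹ := K1 θm
    have hcrossB : b.1 * B.2 - b.2 * B.1 = ((γ θp) ^ 2)⁻¹ := K1 θp
    have hueq : u * ((γ θm) ^ 2)⁻¹ = ((γ θp) ^ 2)⁻¹ := by
      rw [← hcrossB, hB1, hB2, hb1, hb2, ← hcrossA]; ring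
    have hp2 : ((γ θp) ^ 2 : ℝ) ≠ 0 := pow_ne_zero 2 (hγne θp)
    have hm2 : ((γ θm) ^ 2 : ℝ) ≠ 0 := pow_ne_zero 2 (hγne θm)
    have hu' : (γ θp) ^ 2 * u = (γ θm) ^ 2 := by
      field_simp [hp2, hm2] at hueq
      rw [div_eq_div_iff hm2 hp2] at hueq
      linear_combination hueq
    rw [K2 θp, K2 θm, ← hB, ← hA, hu, smul_smul, hu']
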